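/- Let M = (m_1,...,m_k) be a super-increasing tuple of positive integers, and let I = (i_1,...,i_r) and J = (j_1,...,j_s) be distinct allowable sub-tuples for M. Then Σ_{ℓ=1}^{r} (−1)^{i_ℓ} m_{i_ℓ} ≠ Σ_{ℓ=1}^{s} (−1)^{j_ℓ} m_{j_ℓ}. -/

import Mathlib

/-- Continued fraction value of a list of rationals:
`cf [n₁,...,n_k] = 1/(n₁ + 1/(n₂ + ... + 1/n_k))`. -/
def cf : List ℚ → ℚ
  | [] => 0
  | n :: L => 1 / (n + cf L)

/-- The alternating sequence `-2, 2, -2, 2, ..., ±2` of length `n`. -/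
def altSeq (n : ℕ) : List ℤ :=
  (List.range n).map (fun j => (-1 : ℤ) ^ (j + 1) * 2)

/-- The `i`-th entry (1-based) of the tuple `M`. -/
def ent (M : List ℕ) (i : ℕ) : ℕ := M.getD (i - 1) 0

/-- `I` is an allowable sub-tuple for the tuple `M` of positive integers:
a strictly increasing tuple of indices in `{1,...,k}` with consecutive
gaps at least 2, such that for every index `i` with `m_i = 1` at least
one of `i-1, i, i+1` belongs to `I`. -/
def IsAllowable (M : List ℕ) (I : List ℕ) : Prop :=
  I.Chain' (fun a b => a + 2 ≤ b) ∧
  (∀ i ∈ I, 1 ≤ i ∧ i ≤ M.length) ∧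
  (∀ i, 1 ≤ i → i ≤ M.length → ent M i = 1 → (i - 1 ∈ I ∨ i ∈ I ∨ i + 1 ∈ I))

/-- The sign `∏_{i' ∈ I, i' < i} (-1)^(m_{i'})` adjusting the entries coming
from position `i` of `M`. -/
def subSign (M : List ℕ) (I : List ℕ) (i : ℕ) : ℤ :=
  ((I.filter (fun i' => decide (i' < i))).map (fun i' => (-1 : ℤ) ^ ent M i')).prod

/-- Before sign adjustment, the block of entries of `M_I` coming from position `i`
of `M`: either the alternating sequence `-2,2,...,±2` of length `m_i - 1`
(if `i ∈ I`), or the single entry `m_i` increased by 1 for each neighbor of `i`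
lying in `I`. -/
def block (M : List ℕ) (I : List ℕ) (i : ℕ) : List ℤ :=
  if i ∈ I then altSeq (ent M i - 1)
  else [(ent M i : ℤ) + (if i - 1 ∈ I then 1 else 0) + (if i + 1 ∈ I then 1 else 0)]

/-- The continued fraction expansion `M_I` associated to an allowable sub-tuple `I`
of `M`. -/
def MI (M : List ℕ) (I : List ℕ) : List ℤ :=
  ((List.range M.length).map (fun idx =>
    (block M I (idx + 1)).map (fun q => subSign M I (idx + 1) * q))).flatten

/-- `n⁺(N) = #{i : (-1)^(i+1) n_i > 0}` (1-based `i`). -/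
def nplus (N : List ℤ) : ℕ :=
  ((List.range N.length).filter
    (fun idx => decide (0 < (-1 : ℤ) ^ idx * N.getD idx 0))).length

/-- `n⁻(N) = #{i : (-1)^(i+1) n_i < 0}` (1-based `i`). -/
def nminus (N : List ℤ) : ℕ :=
  ((List.range N.length).filter
    (fun idx => decide ((-1 : ℤ) ^ idx * N.getD idx 0 < 0))).length

/-- `Σ_{i ∈ I} (-1)^i m_i`. -/
def sgnSum (M : List ℕ) (I : List ℕ) : ℤ :=
  (I.map (fun i => (-1 : ℤ) ^ i * (ent M i : ℤ))).sum

/-- The dual sub-tuple `(k+1-i_j, ..., k+1-i_1)` of `I = (i_1,...,i_j)`. -/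
def dualSub (k : ℕ) (I : List ℕ) : List ℕ :=
  (I.map (fun i => k + 1 - i)).reverse

/-- `(m_1,...,m_k)` is super-increasing if `m_i > Σ_{j<i} m_j` for all `i`. -/
def SuperInc (M : List ℕ) : Prop :=
  ∀ i, 1 ≤ i → i ≤ M.length → (M.take (i - 1)).sum < ent M i

lemma take_sum_succ (M : List ℕ) (n : ℕ) :
    (M.take (n+1)).sum = (M.take n).sum + ent M (n+1) := by
  show _ = _ + M.getD n 0
  rcases lt_or_ge n M.length with h | h
  · rw [List.sum_take_succ _ _ h, List.getD_eq_getElem _ _ h]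
  · rw [List.take_of_length_le h, List.take_of_length_le (le_trans h (Nat.le_succ _)),
      List.getD_eq_default _ _ h]; omega

lemma take_sum_succ' (M : List ℕ) (n : ℕ) :
    ((M.take (n+1)).sum : ℤ) = ((M.take n).sum : ℤ) + (ent M (n+1) : ℤ) := by
  rw [take_sum_succ]; push_cast; ring

lemma sgnSum_cons (M : List ℕ) (a : ℕ) (I : List ℕ) :
    sgnSum M (a :: I) = (-1:ℤ)^a * ent M a + sgnSum M I := by
  simp [sgnSum]

lemma abs_term (M : List ℕ) (a : ℕ) : |(-1:ℤ)^a * (ent M a : ℤ)| = ent M a := by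
  rw [abs_mul, abs_pow, abs_neg, abs_one, one_pow, one_mul, Int.abs_natCast]

lemma head_max {t : ℕ} {I : List ℕ} (pI : I.Pairwise (· > ·))
    (hI : ∀ i ∈ I, i ≤ t) (hm : t ∈ I) :
    ∃ I', I = t :: I' ∧ I'.Pairwise (· > ·) ∧ ∀ i ∈ I', i < t := by
  cases I with
  | nil => simp at hm
  | cons a I' =>
    have hlt : ∀ i ∈ I', i < a := fun i hi => (List.pairwise_cons.1 pI).1 i hi
    have ha : a = t := by
      rcases List.mem_cons.1 hm with hm | hm
      · omega
      · have := hlt _ hm; have := hI a List.mem_cons_self; omega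
    subst ha
    exact ⟨I', rfl, (List.pairwise_cons.1 pI).2, hlt⟩

lemma diff_bound (M : List ℕ) :
    ∀ t (I J : List ℕ), I.Pairwise (· > ·) → J.Pairwise (· > ·) →
    (∀ i ∈ I, 1 ≤ i ∧ i ≤ t) → (∀ i ∈ J, 1 ≤ i ∧ i ≤ t) →
    |sgnSum M I - sgnSum M J| ≤ ((M.take t).sum : ℤ) := by
  intro t
  induction t with
  | zero =>
    intro I J _ _ hI hJ
    have hI0 : I = [] := List.eq_nil_iff_forall_not_mem.2 (fun i hi => by have := hI i hi; omega)
    have hJ0 : J = [] := List.eq_nil_iff_forall_not_mem.2 (fun i hi => by have := hJ i hi; omega)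
    simp [hI0, hJ0, sgnSum]
  | succ t ih =>
    intro I J pI pJ hI hJ
    have hmono : ((M.take t).sum : ℤ) ≤ ((M.take (t+1)).sum : ℤ) := by
      rw [take_sum_succ']; simp
    by_cases hIt : (t+1) ∈ I <;> by_cases hJt : (t+1) ∈ J
    · obtain ⟨I', rfl, pI', hI'⟩ := head_max pI (fun i hi => (hI i hi).2) hIt
      obtain ⟨J', rfl, pJ', hJ'⟩ := head_max pJ (fun i hi => (hJ i hi).2) hJt
      rw [sgnSum_cons, sgnSum_cons]
      have hb := ih I' J' pI' pJ'
        (fun i hi => ⟨(hI i (List.mem_cons_of_mem _ hi)).1, by have := hI' i hi; omega⟩)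
        (fun i hi => ⟨(hJ i (List.mem_cons_of_mem _ hi)).1, by have := hJ' i hi; omega⟩)
      calc |(-1:ℤ)^(t+1) * ent M (t+1) + sgnSum M I' - ((-1:ℤ)^(t+1) * ent M (t+1) + sgnSum M J')|
          = |sgnSum M I' - sgnSum M J'| := by ring_nf
        _ ≤ ((M.take t).sum : ℤ) := hb
        _ ≤ _ := hmono
    · obtain ⟨I', rfl, pI', hI'⟩ := head_max pI (fun i hi => (hI i hi).2) hIt
      have hJ' : ∀ i ∈ J, 1 ≤ i ∧ i ≤ t := fun i hi => by
        have := hJ i hi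
        have : i ≠ t + 1 := fun h => hJt (h ▸ hi)
        omega
      have hb := ih I' J pI' pJ
        (fun i hi => ⟨(hI i (List.mem_cons_of_mem _ hi)).1, by have := hI' i hi; omega⟩) hJ'
      rw [sgnSum_cons, take_sum_succ']
      calc |(-1:ℤ)^(t+1) * ent M (t+1) + sgnSum M I' - sgnSum M J|
          ≤ |(-1:ℤ)^(t+1) * ent M (t+1)| + |sgnSum M I' - sgnSum M J| := by
            have := abs_add_le ((-1:ℤ)^(t+1) * ent M (t+1)) (sgnSum M I' - sgnSum M J)
            simpa [add_sub_assoc] using this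
        _ ≤ (ent M (t+1) : ℤ) + ((M.take t).sum : ℤ) := by
            rw [abs_term]; exact add_le_add le_rfl hb
        _ = _ := by ring
    · obtain ⟨J', rfl, pJ', hJ'⟩ := head_max pJ (fun i hi => (hJ i hi).2) hJt
      have hI' : ∀ i ∈ I, 1 ≤ i ∧ i ≤ t := fun i hi => by
        have := hI i hi
        have : i ≠ t + 1 := fun h => hIt (h ▸ hi)
        omega
      have hb := ih I J' pI pJ' hI'
        (fun i hi => ⟨(hJ i (List.mem_cons_of_mem _ hi)).1, by have := hJ' i hi; omega⟩)
      rw [sgnSum_cons, take_sum_succ']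
      calc |sgnSum M I - ((-1:ℤ)^(t+1) * ent M (t+1) + sgnSum M J')|
          ≤ |(-1:ℤ)^(t+1) * ent M (t+1)| + |sgnSum M I - sgnSum M J'| := by
            rw [abs_sub_comm]
            have := abs_add_le ((-1:ℤ)^(t+1) * ent M (t+1)) (sgnSum M J' - sgnSum M I)
            rw [abs_sub_comm (sgnSum M J')] at this
            simpa [add_sub_assoc] using this
        _ ≤ (ent M (t+1) : ℤ) + ((M.take t).sum : ℤ) := by
            rw [abs_term]; exact add_le_add le_rfl hb
        _ = _ := by ring
    · have hI' : ∀ i ∈ I, 1 ≤ i ∧ i ≤ t := fun i hi => by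
        have := hI i hi; have : i ≠ t + 1 := fun h => hIt (h ▸ hi); omega
      have hJ' : ∀ i ∈ J, 1 ≤ i ∧ i ≤ t := fun i hi => by
        have := hJ i hi; have : i ≠ t + 1 := fun h => hJt (h ▸ hi); omega
      exact le_trans (ih I J pI pJ hI' hJ') hmono

lemma sgnSum_ne_aux (M : List ℕ) (hsuper : SuperInc M) :
    ∀ t, t ≤ M.length → ∀ I J : List ℕ, I.Pairwise (· > ·) → J.Pairwise (· > ·) →
    (∀ i ∈ I, 1 ≤ i ∧ i ≤ t) → (∀ i ∈ J, 1 ≤ i ∧ i ≤ t) → I ≠ J →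
    sgnSum M I ≠ sgnSum M J := by
  intro t
  induction t with
  | zero =>
    intro _ I J _ _ hI hJ hne
    exfalso; apply hne
    have hI0 : I = [] := List.eq_nil_iff_forall_not_mem.2 (fun i hi => by have := hI i hi; omega)
    have hJ0 : J = [] := List.eq_nil_iff_forall_not_mem.2 (fun i hi => by have := hJ i hi; omega)
    rw [hI0, hJ0]
  | succ t ih =>
    intro hlen I J pI pJ hI hJ hne heq
    have hsup : ((M.take t).sum : ℤ) < (ent M (t+1) : ℤ) := by
      exact_mod_cast hsuper (t+1) (by omega) hlen
    by_cases hIt : (t+1) ∈ I <;> by_cases hJt : (t+1) ∈ J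
    · obtain ⟨I', rfl, pI', hI'⟩ := head_max pI (fun i hi => (hI i hi).2) hIt
      obtain ⟨J', rfl, pJ', hJ'⟩ := head_max pJ (fun i hi => (hJ i hi).2) hJt
      rw [sgnSum_cons, sgnSum_cons] at heq
      have heq' : sgnSum M I' = sgnSum M J' := by linarith
      exact ih (by omega) I' J' pI' pJ'
        (fun i hi => ⟨(hI i (List.mem_cons_of_mem _ hi)).1, by have := hI' i hi; omega⟩)
        (fun i hi => ⟨(hJ i (List.mem_cons_of_mem _ hi)).1, by have := hJ' i hi; omega⟩)
        (fun h => hne (by rw [h])) heq'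
    · obtain ⟨I', rfl, pI', hI'⟩ := head_max pI (fun i hi => (hI i hi).2) hIt
      have hJ' : ∀ i ∈ J, 1 ≤ i ∧ i ≤ t := fun i hi => by
        have := hJ i hi; have : i ≠ t + 1 := fun h => hJt (h ▸ hi); omega
      have hb := diff_bound M t I' J pI' pJ
        (fun i hi => ⟨(hI i (List.mem_cons_of_mem _ hi)).1, by have := hI' i hi; omega⟩) hJ'
      rw [sgnSum_cons] at heq
      have : |(-1:ℤ)^(t+1) * (ent M (t+1) : ℤ)| = |sgnSum M J - sgnSum M I'| := by
        congr 1; linarith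
      rw [abs_term, abs_sub_comm] at this
      rw [this] at hsup
      exact absurd hb (not_le.2 hsup)
    · obtain ⟨J', rfl, pJ', hJ'⟩ := head_max pJ (fun i hi => (hJ i hi).2) hJt
      have hI' : ∀ i ∈ I, 1 ≤ i ∧ i ≤ t := fun i hi => by
        have := hI i hi; have : i ≠ t + 1 := fun h => hIt (h ▸ hi); omega
      have hb := diff_bound M t J' I pJ' pI
        (fun i hi => ⟨(hJ i (List.mem_cons_of_mem _ hi)).1, by have := hJ' i hi; omega⟩) hI'
      rw [sgnSum_cons] at heq
      have : |(-1:ℤ)^(t+1) * (ent M (t+1) : ℤ)| = |sgnSum M I - sgnSum M J'| := by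
        congr 1; linarith
      rw [abs_term, abs_sub_comm] at this
      rw [this] at hsup
      exact absurd hb (not_le.2 hsup)
    · have hI' : ∀ i ∈ I, 1 ≤ i ∧ i ≤ t := fun i hi => by
        have := hI i hi; have : i ≠ t + 1 := fun h => hIt (h ▸ hi); omega
      have hJ' : ∀ i ∈ J, 1 ≤ i ∧ i ≤ t := fun i hi => by
        have := hJ i hi; have : i ≠ t + 1 := fun h => hJt (h ▸ hi); omega
      exact ih (by omega) I J pI pJ hI' hJ' hne heq

/-- For a super-increasing tuple
sub-tuples have distinct signed sums `Σ (-1)^(i_ℓ) m_(i_ℓ)`. -/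
theorem sgnSum_injective_of_superInc (M : List ℕ) (hpos : ∀ m ∈ M, 0 < m)
    (hsuper : SuperInc M) (I J : List ℕ)
    (hI : IsAllowable M I) (hJ : IsAllowable M J) (hne : I ≠ J) :
    sgnSum M I ≠ sgnSum M J := by
  have hrev : ∀ K : List ℕ, sgnSum M K.reverse = sgnSum M K := by
    intro K; simp only [sgnSum, List.map_reverse, List.sum_reverse]
  have hpair : ∀ K : List ℕ, K.Chain' (fun a b => a + 2 ≤ b) → K.reverse.Pairwise (· > ·) := by
    intro K h
    rw [List.pairwise_reverse]
    have h' : K.Chain' (· < ·) := h.imp (fun {a b} hab => by omega)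
    simp only [List.Chain', List.isChain_iff_pairwise] at h'
    exact h'.imp (fun hab => hab)
  rw [← hrev I, ← hrev J]
  exact sgnSum_ne_aux M hsuper M.length le_rfl I.reverse J.reverse
    (hpair I hI.1) (hpair J hJ.1)
    (fun i hi => hI.2.1 i (List.mem_reverse.1 hi))
    (fun i hi => hJ.2.1 i (List.mem_reverse.1 hi))
    (fun h => hne (by simpa using congrArg List.reverse h))
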